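/- Let q ≥ 1 and a be natural numbers with a ≤ q, and let g_c, G_cp : ℝ → ℝ → ℝ be kernels, each continuous on the triangular domain D_T := {(t,τ) : 0 ≤ t ≤ T, 0 ≤ τ ≤ t} for every T > 0, with G_cp(t,τ) ≥ g_c(t,τ) ≥ 0 for all 0 ≤ τ ≤ t. Define the closed-loop kernel K(t,σ) := ∫_σ^t G_cp(t,τ)·(τ−σ)^(q−1)/(q−1)! dτ. Assume: (i) [stability of the LVIE] for every ε > 0 there exists δ > 0 such that for every continuous φ : ℝ → ℝ with |φ(t)| < δ for all t ≥ 0 and every continuous x : ℝ → ℝ satisfying x(t) = ∫₀ᵗ K(t,τ)·x(τ) dτ + φ(t) for all t ≥ 0, one has |x(t)| < ε for all t ≥ 0; (ii) there exists M ≥ 0 with ∫₀ᵗ K(t,σ) dσ ≤ M for all t ≥ 0; (iii) there exists M₁ ≥ 0 with ∫₀^(min(t,1)) g_c(t,τ) dτ ≤ M₁ for all t ≥ 0. Then for every ε > 0 there exists a real number h ≠ 0 such that every continuous u : ℝ → ℝ satisfying u(t) = ∫₀ᵗ K(t,τ)·u(τ) dτ + (h/a!)·∫₀ᵗ g_c(t,τ)·τ^a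 dτ for all t ≥ 0 satisfies |u(t)| ≤ ε for all t ≥ 0. (Paper's Theorem 6: ε-stealth of polynomial FDIAs of degree a ≤ q.) -/

import Mathlib

open intervalIntegral Set

/-- A kernel `g : ℝ → ℝ → ℝ` is continuous on the triangular domain
`D_T = {(t,τ) : 0 ≤ t ≤ T, 0 ≤ τ ≤ t}` for every `T > 0`. -/
def ContinuousOnTriangles (g : ℝ → ℝ → ℝ) : Prop :=
  ∀ T : ℝ, 0 < T →
    ContinuousOn (fun p : ℝ × ℝ => g p.1 p.2)
      {p : ℝ × ℝ | 0 ≤ p.1 ∧ p.1 ≤ T ∧ 0 ≤ p.2 ∧ p.2 ≤ p.1}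

open MeasureTheory

/-- Extend a triangle-continuous kernel to a globally continuous function. -/
lemma exists_cont_ext (g : ℝ → ℝ → ℝ) (hg : ContinuousOnTriangles g) :
    ∃ g' : ℝ × ℝ → ℝ, Continuous g' ∧ ∀ t τ : ℝ, 0 ≤ τ → τ ≤ t → g' (t, τ) = g t τ := by
  set D : Set (ℝ × ℝ) := {p : ℝ × ℝ | 0 ≤ p.2 ∧ p.2 ≤ p.1} with hD
  have hDclosed : IsClosed D := by
    apply IsClosed.inter
    · exact isClosed_le continuous_const continuous_snd
    · exact isClosed_le continuous_snd continuous_fst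
  have hcontD : ContinuousOn (fun p : ℝ × ℝ => g p.1 p.2) D := by
    intro p hp
    obtain ⟨h1, h2⟩ := hp
    have hT : (0:ℝ) < p.1 + 1 := by linarith [le_trans h1 h2]
    have := hg (p.1 + 1) hT
    have hmem : p ∈ {p : ℝ × ℝ | 0 ≤ p.1 ∧ p.1 ≤ p.1 + 1 ∧ 0 ≤ p.2 ∧ p.2 ≤ p.1} := by
      exact ⟨le_trans h1 h2, by linarith, h1, h2⟩
    have hcw := this p hmem
    apply hcw.mono_of_mem_nhdsWithin
    have hopen : {x : ℝ × ℝ | x.1 < p.1 + 1} ∈ nhds p := by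
      exact (isOpen_lt continuous_fst continuous_const).mem_nhds (by simp)
    filter_upwards [mem_nhdsWithin_of_mem_nhds hopen, self_mem_nhdsWithin] with x hx hxD
    exact ⟨le_trans hxD.1 hxD.2, le_of_lt hx, hxD.1, hxD.2⟩
  obtain ⟨g', hg'⟩ := ContinuousMap.exists_restrict_eq hDclosed
    ⟨_, hcontD.restrict⟩
  refine ⟨g', g'.continuous, fun t τ h1 h2 => ?_⟩
  have := congrFun (congrArg ContinuousMap.toFun hg') ⟨(t, τ), ⟨h1, h2⟩⟩
  simpa using this

set_option maxHeartbeats 1000000 in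
lemma integral_triangle_swap (f : ℝ × ℝ → ℝ) (hf : Continuous f) {t : ℝ} (ht : 0 ≤ t) :
    (∫ σ in (0:ℝ)..t, (∫ τ in σ..t, f (σ, τ))) =
      ∫ τ in (0:ℝ)..t, (∫ σ in (0:ℝ)..τ, f (σ, τ)) := by
  set g : ℝ → ℝ → ℝ := fun σ τ => if σ < τ then f (σ, τ) else 0 with hgdef
  have hgind : Function.uncurry g = Set.indicator {p : ℝ × ℝ | p.1 < p.2} f := by
    funext p
    by_cases h : p.1 < p.2
    · simp [Function.uncurry, hgdef, Set.indicator, h]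
    · simp [Function.uncurry, hgdef, Set.indicator, h]
  -- integrability of slices
  have hslice1 : ∀ σ a b : ℝ, IntervalIntegrable (g σ) volume a b := by
    intro σ a b
    have : g σ = Set.indicator (Ioi σ) (fun τ => f (σ, τ)) := by
      funext τ; by_cases h : σ < τ <;> simp [hgdef, Set.indicator, h]
    rw [this, intervalIntegrable_iff]
    exact ((hf.comp (Continuous.prodMk_right σ)).integrableOn_Ioc).indicator measurableSet_Ioi
  have hslice2 : ∀ τ a b : ℝ, IntervalIntegrable (fun σ => g σ τ) volume a b := by
    intro τ a b
    have : (fun σ => g σ τ) = Set.indicator (Iio τ) (fun σ => f (σ, τ)) := by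
      funext σ; by_cases h : σ < τ <;> simp [hgdef, Set.indicator, h]
    rw [this, intervalIntegrable_iff]
    exact ((hf.comp (Continuous.prodMk_left τ)).integrableOn_Ioc).indicator measurableSet_Iio
  -- step 1: inner integral from σ to t equals inner integral from 0 to t of g
  have step1 : ∀ σ ∈ Set.uIcc (0:ℝ) t, (∫ τ in σ..t, f (σ, τ)) = ∫ τ in (0:ℝ)..t, g σ τ := by
    intro σ hσ
    rw [Set.uIcc_of_le ht] at hσ
    obtain ⟨hσ0, hσt⟩ := hσ
    have hsplit : (∫ τ in (0:ℝ)..σ, g σ τ) + (∫ τ in σ..t, g σ τ) = ∫ τ in (0:ℝ)..t, g σ τ :=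
      intervalIntegral.integral_add_adjacent_intervals (hslice1 σ 0 σ) (hslice1 σ σ t)
    have h1 : (∫ τ in (0:ℝ)..σ, g σ τ) = 0 := by
      rw [intervalIntegral.integral_congr (g := fun _ => (0:ℝ)) ?_, intervalIntegral.integral_zero]
      intro τ hτ
      rw [Set.uIcc_of_le hσ0] at hτ
      simp [hgdef, not_lt.mpr hτ.2]
    have h2 : (∫ τ in σ..t, g σ τ) = ∫ τ in σ..t, f (σ, τ) := by
      rw [intervalIntegral.integral_of_le hσt, intervalIntegral.integral_of_le hσt]
      apply MeasureTheory.setIntegral_congr_fun measurableSet_Ioc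
      intro τ hτ
      simp [hgdef, hτ.1]
    rw [← hsplit, h1, h2, zero_add]
  -- step 3: for each τ, integral over σ
  have step3 : ∀ τ ∈ Set.uIcc (0:ℝ) t, (∫ σ in (0:ℝ)..t, g σ τ) = ∫ σ in (0:ℝ)..τ, f (σ, τ) := by
    intro τ hτ
    rw [Set.uIcc_of_le ht] at hτ
    obtain ⟨hτ0, hτt⟩ := hτ
    have hsplit : (∫ σ in (0:ℝ)..τ, g σ τ) + (∫ σ in τ..t, g σ τ) = ∫ σ in (0:ℝ)..t, g σ τ :=
      intervalIntegral.integral_add_adjacent_intervals (hslice2 τ 0 τ) (hslice2 τ τ t)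
    have h1 : (∫ σ in τ..t, g σ τ) = 0 := by
      rw [intervalIntegral.integral_congr (g := fun _ => (0:ℝ)) ?_, intervalIntegral.integral_zero]
      intro σ hσ
      rw [Set.uIcc_of_le hτt] at hσ
      simp [hgdef, not_lt.mpr hσ.1]
    have h2 : (∫ σ in (0:ℝ)..τ, g σ τ) = ∫ σ in (0:ℝ)..τ, f (σ, τ) := by
      rw [intervalIntegral.integral_of_le hτ0, intervalIntegral.integral_of_le hτ0]
      apply MeasureTheory.setIntegral_congr_ae measurableSet_Ioc
      have hne : ∀ᵐ σ : ℝ, σ ≠ τ := by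
        rw [MeasureTheory.ae_iff]
        simpa using (by simp : {σ : ℝ | ¬ σ ≠ τ} = {τ}) ▸ Real.volume_singleton
      filter_upwards [hne] with σ hσ hmem
      simp [hgdef, lt_of_le_of_ne hmem.2 hσ]
    rw [← hsplit, h1, add_zero, h2]
  -- step 2: the actual swap over the square
  have hswap : (∫ σ in (0:ℝ)..t, (∫ τ in (0:ℝ)..t, g σ τ)) =
      ∫ τ in (0:ℝ)..t, (∫ σ in (0:ℝ)..t, g σ τ) := by
    rw [intervalIntegral.integral_of_le ht, intervalIntegral.integral_of_le ht]
    simp_rw [intervalIntegral.integral_of_le ht]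
    have hFint : IntegrableOn f (Ioc 0 t ×ˢ Ioc 0 t) (volume.prod volume) := by
      apply ((hf.continuousOn).integrableOn_compact ((isCompact_Icc).prod isCompact_Icc)).mono_set
      exact Set.prod_mono Ioc_subset_Icc_self Ioc_subset_Icc_self
    have hint : MeasureTheory.Integrable (Function.uncurry g)
        ((volume.restrict (Ioc (0:ℝ) t)).prod (volume.restrict (Ioc (0:ℝ) t))) := by
      rw [hgind, MeasureTheory.Measure.prod_restrict]
      exact hFint.indicator ((isOpen_lt continuous_fst continuous_snd).measurableSet)
    exact MeasureTheory.integral_integral_swap hint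
  rw [intervalIntegral.integral_congr step1, hswap, intervalIntegral.integral_congr step3]

lemma pow_integral_eval {q : ℕ} (hq : 1 ≤ q) (τ : ℝ) :
    (∫ σ in (0:ℝ)..τ, (τ - σ) ^ (q - 1)) = τ ^ q / q := by
  have h1 : q - 1 + 1 = q := Nat.succ_pred_eq_of_pos hq
  have := intervalIntegral.integral_comp_sub_left (a := (0:ℝ)) (b := τ)
    (fun x => x ^ (q - 1)) τ
  simp only [sub_zero, sub_self] at this
  rw [this, integral_pow, h1]
  have hq0 : q ≠ 0 := by omega
  have h2 : ((q - 1 : ℕ) : ℝ) + 1 = (q : ℝ) := by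
    rw [← Nat.cast_one (R := ℝ), ← Nat.cast_add, h1]
  simp [zero_pow hq0, h2]

set_option maxHeartbeats 1000000 in
/-- **Paper's Theorem 6 (ε-stealth).** Under stability of the closed-loop LVIE with kernel
`K(t,σ) = ∫_σ^t G_cp(t,τ)(τ-σ)^(q-1)/(q-1)! dτ`, uniform boundedness of `∫₀ᵗ K(t,σ) dσ`,
and uniform boundedness of `∫₀^(min(t,1)) g_c(t,τ) dτ`, a polynomial FDIA of degree
`a ≤ q` admits a nonzero weight `h` making it `ε`-stealthy with respect to `u`. -/
theorem epsilon_stealth_of_polynomial_fdia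
    (q a : ℕ) (hq : 1 ≤ q) (haq : a ≤ q)
    (g_c G_cp : ℝ → ℝ → ℝ)
    (hgc_cont : ContinuousOnTriangles g_c)
    (hGcp_cont : ContinuousOnTriangles G_cp)
    (hnonneg : ∀ t τ : ℝ, 0 ≤ τ → τ ≤ t → 0 ≤ g_c t τ)
    (hdom : ∀ t τ : ℝ, 0 ≤ τ → τ ≤ t → g_c t τ ≤ G_cp t τ)
    (K : ℝ → ℝ → ℝ)
    (hK : ∀ t σ : ℝ, K t σ =
      ∫ τ in σ..t, G_cp t τ * (τ - σ) ^ (q - 1) / (Nat.factorial (q - 1) : ℝ))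
    -- (i) stability of the LVIE
    (hstab : ∀ ε : ℝ, 0 < ε → ∃ δ : ℝ, 0 < δ ∧
      ∀ φ : ℝ → ℝ, Continuous φ → (∀ t : ℝ, 0 ≤ t → |φ t| < δ) →
      ∀ x : ℝ → ℝ, Continuous x →
        (∀ t : ℝ, 0 ≤ t → x t = (∫ τ in (0:ℝ)..t, K t τ * x τ) + φ t) →
        ∀ t : ℝ, 0 ≤ t → |x t| < ε)
    -- (ii) uniform boundedness of the closed-loop kernel integral
    (M : ℝ) (hM : 0 ≤ M)
    (hbound : ∀ t : ℝ, 0 ≤ t → (∫ σ in (0:ℝ)..t, K t σ) ≤ M)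
    -- (iii) uniform boundedness of the controller kernel near τ = 0
    (M₁ : ℝ) (hM₁ : 0 ≤ M₁)
    (hbound₁ : ∀ t : ℝ, 0 ≤ t → (∫ τ in (0:ℝ)..(min t 1), g_c t τ) ≤ M₁) :
    ∀ ε : ℝ, 0 < ε → ∃ h : ℝ, h ≠ 0 ∧
      ∀ u : ℝ → ℝ, Continuous u →
        (∀ t : ℝ, 0 ≤ t → u t = (∫ τ in (0:ℝ)..t, K t τ * u τ) +
          (h / (Nat.factorial a : ℝ)) * ∫ τ in (0:ℝ)..t, g_c t τ * τ ^ a) →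
        ∀ t : ℝ, 0 ≤ t → |u t| ≤ ε := by
  obtain ⟨gc', hgc'c, hgc'⟩ := exists_cont_ext g_c hgc_cont
  obtain ⟨Gp', hGp'c, hGp'⟩ := exists_cont_ext G_cp hGcp_cont
  have hfactq : (0:ℝ) < (q.factorial : ℝ) := by exact_mod_cast Nat.factorial_pos q
  have hfactq1 : (0:ℝ) < ((q-1).factorial : ℝ) := by exact_mod_cast Nat.factorial_pos (q-1)
  -- closed-loop kernel identity via Fubini
  have hKint : ∀ t : ℝ, 0 ≤ t → (∫ σ in (0:ℝ)..t, K t σ) =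
      ∫ τ in (0:ℝ)..t, Gp' (t, τ) * τ ^ q / (q.factorial : ℝ) := by
    intro t ht
    set f : ℝ × ℝ → ℝ :=
      fun p => Gp' (t, p.2) * (p.2 - p.1) ^ (q-1) / (((q-1).factorial : ℝ)) with hfdef
    have hfc : Continuous f := by fun_prop
    have h1 : (∫ σ in (0:ℝ)..t, K t σ) = ∫ σ in (0:ℝ)..t, ∫ τ in σ..t, f (σ, τ) := by
      apply intervalIntegral.integral_congr
      intro σ hσ
      rw [Set.uIcc_of_le ht] at hσ
      rw [hK]
      apply intervalIntegral.integral_congr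
      intro τ hτ
      rw [Set.uIcc_of_le hσ.2] at hτ
      simp only [hfdef]
      rw [hGp' t τ (le_trans hσ.1 hτ.1) hτ.2]
    rw [h1, integral_triangle_swap f hfc ht]
    apply intervalIntegral.integral_congr
    intro τ hτ
    rw [Set.uIcc_of_le ht] at hτ
    have h2 : (∫ σ in (0:ℝ)..τ, f (σ, τ)) =
        (Gp' (t, τ) / ((q-1).factorial : ℝ)) * ∫ σ in (0:ℝ)..τ, (τ - σ) ^ (q-1) := by
      rw [← intervalIntegral.integral_const_mul]
      apply intervalIntegral.integral_congr
      intro σ _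
      simp only [hfdef]
      ring
    show (∫ σ in (0:ℝ)..τ, f (σ, τ)) = Gp' (t, τ) * τ ^ q / (q.factorial : ℝ)
    rw [h2, pow_integral_eval hq τ]
    have hfact : (q.factorial : ℝ) = q * ((q-1).factorial : ℝ) := by
      conv_lhs => rw [show q = (q-1)+1 from (Nat.succ_pred_eq_of_pos hq).symm]
      rw [Nat.factorial_succ]
      push_cast [Nat.sub_add_cancel hq]
      ring
    rw [div_mul_div_comm, hfact, mul_comm ((q:ℝ)) (((q-1).factorial : ℝ))]
  -- bound on the weighted controller integral
  set B : ℝ := M₁ + (q.factorial : ℝ) * M with hBdef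
  have hB : 0 ≤ B := add_nonneg hM₁ (mul_nonneg hfactq.le hM)
  have hIbd : ∀ t : ℝ, 0 ≤ t →
      (0 ≤ ∫ τ in (0:ℝ)..t, gc' (t, τ) * τ ^ a) ∧
      (∫ τ in (0:ℝ)..t, gc' (t, τ) * τ ^ a) ≤ B := by
    intro t ht
    have hnn : ∀ τ ∈ Set.Icc (0:ℝ) t, 0 ≤ gc' (t, τ) * τ ^ a := by
      intro τ hτ
      rw [hgc' t τ hτ.1 hτ.2]
      exact mul_nonneg (hnonneg t τ hτ.1 hτ.2) (pow_nonneg hτ.1 a)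
    constructor
    · exact intervalIntegral.integral_nonneg ht (fun τ hτ => hnn τ hτ)
    set m : ℝ := min t 1 with hmdef
    have hm0 : 0 ≤ m := le_min ht zero_le_one
    have hmt : m ≤ t := min_le_left _ _
    have hm1 : m ≤ 1 := min_le_right _ _
    have hint : ∀ (c d : ℝ) (n : ℕ),
        IntervalIntegrable (fun τ => gc' (t, τ) * τ ^ n) volume c d := by
      intro c d n
      apply Continuous.intervalIntegrable
      fun_prop
    have hintc : ∀ (c d : ℝ), IntervalIntegrable (fun τ => gc' (t, τ)) volume c d := by
      intro c d
      apply Continuous.intervalIntegrable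
      fun_prop
    have hsplit : (∫ τ in (0:ℝ)..m, gc' (t, τ) * τ ^ a) + (∫ τ in m..t, gc' (t, τ) * τ ^ a)
        = ∫ τ in (0:ℝ)..t, gc' (t, τ) * τ ^ a :=
      intervalIntegral.integral_add_adjacent_intervals (hint 0 m a) (hint m t a)
    have hpart1 : (∫ τ in (0:ℝ)..m, gc' (t, τ) * τ ^ a) ≤ M₁ := by
      have step : (∫ τ in (0:ℝ)..m, gc' (t, τ) * τ ^ a) ≤ ∫ τ in (0:ℝ)..m, gc' (t, τ) := by
        apply intervalIntegral.integral_mono_on hm0 (hint 0 m a) (hintc 0 m)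
        intro τ hτ
        have hτt : τ ≤ t := le_trans hτ.2 hmt
        have h01 : τ ^ a ≤ 1 := pow_le_one₀ hτ.1 (le_trans hτ.2 hm1)
        have := hnonneg t τ hτ.1 hτt
        rw [hgc' t τ hτ.1 hτt] at *
        nlinarith
      have heqc : (∫ τ in (0:ℝ)..m, gc' (t, τ)) = ∫ τ in (0:ℝ)..m, g_c t τ := by
        apply intervalIntegral.integral_congr
        intro τ hτ
        rw [Set.uIcc_of_le hm0] at hτ
        exact hgc' t τ hτ.1 (le_trans hτ.2 hmt)
      calc (∫ τ in (0:ℝ)..m, gc' (t, τ) * τ ^ a) ≤ ∫ τ in (0:ℝ)..m, gc' (t, τ) := step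
        _ = ∫ τ in (0:ℝ)..m, g_c t τ := heqc
        _ ≤ M₁ := hbound₁ t ht
    have hpart2 : (∫ τ in m..t, gc' (t, τ) * τ ^ a) ≤ (q.factorial : ℝ) * M := by
      by_cases ht1 : t ≤ 1
      · have hmeq : m = t := min_eq_left ht1
        rw [hmeq, intervalIntegral.integral_same]
        positivity
      · push_neg at ht1
        have hmeq : m = 1 := min_eq_right ht1.le
        have hGint : ∀ (c d : ℝ), IntervalIntegrable (fun τ => Gp' (t, τ) * τ ^ q) volume c d := by
          intro c d
          apply Continuous.intervalIntegrable
          fun_prop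
        have s1 : (∫ τ in m..t, gc' (t, τ) * τ ^ a) ≤ ∫ τ in m..t, gc' (t, τ) * τ ^ q := by
          apply intervalIntegral.integral_mono_on hmt (hint m t a) (hint m t q)
          intro τ hτ
          have hτ1 : (1:ℝ) ≤ τ := hmeq ▸ hτ.1
          have hτ0 : (0:ℝ) ≤ τ := by linarith
          have hgnn := hnonneg t τ hτ0 hτ.2
          rw [hgc' t τ hτ0 hτ.2] at *
          have : τ ^ a ≤ τ ^ q := pow_le_pow_right₀ hτ1 haq
          nlinarith
        have s2 : (∫ τ in m..t, gc' (t, τ) * τ ^ q) ≤ ∫ τ in (0:ℝ)..t, gc' (t, τ) * τ ^ q := by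
          have hadj : (∫ τ in (0:ℝ)..m, gc' (t, τ) * τ ^ q) + (∫ τ in m..t, gc' (t, τ) * τ ^ q)
              = ∫ τ in (0:ℝ)..t, gc' (t, τ) * τ ^ q :=
            intervalIntegral.integral_add_adjacent_intervals (hint 0 m q) (hint m t q)
          have hnn0 : 0 ≤ ∫ τ in (0:ℝ)..m, gc' (t, τ) * τ ^ q := by
            apply intervalIntegral.integral_nonneg hm0
            intro τ hτ
            have hτt : τ ≤ t := le_trans hτ.2 hmt
            rw [hgc' t τ hτ.1 hτt]
            exact mul_nonneg (hnonneg t τ hτ.1 hτt) (pow_nonneg hτ.1 q)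
          linarith
        have s3 : (∫ τ in (0:ℝ)..t, gc' (t, τ) * τ ^ q) ≤ ∫ τ in (0:ℝ)..t, Gp' (t, τ) * τ ^ q := by
          apply intervalIntegral.integral_mono_on ht (hint 0 t q) (hGint 0 t)
          intro τ hτ
          rw [hgc' t τ hτ.1 hτ.2, hGp' t τ hτ.1 hτ.2]
          exact mul_le_mul_of_nonneg_right (hdom t τ hτ.1 hτ.2) (pow_nonneg hτ.1 q)
        have s4 : (∫ τ in (0:ℝ)..t, Gp' (t, τ) * τ ^ q) ≤ (q.factorial : ℝ) * M := by
          have hK1 := hKint t ht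
          have hK2 := hbound t ht
          have heq : (∫ τ in (0:ℝ)..t, Gp' (t, τ) * τ ^ q) =
              (q.factorial : ℝ) * ∫ τ in (0:ℝ)..t, Gp' (t, τ) * τ ^ q / (q.factorial : ℝ) := by
            rw [← intervalIntegral.integral_const_mul]
            apply intervalIntegral.integral_congr
            intro τ _
            field_simp
          rw [heq, ← hK1]
          exact mul_le_mul_of_nonneg_left hK2 hfactq.le
        linarith
    linarith
  -- main argument
  intro ε hε
  obtain ⟨δ, hδpos, hδ⟩ := hstab ε hε
  have hfacta : (0:ℝ) < (a.factorial : ℝ) := by exact_mod_cast Nat.factorial_pos a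
  refine ⟨δ * (a.factorial : ℝ) / (2 * (B + 1)), by positivity, ?_⟩
  intro u hu hequ t ht
  set c : ℝ := δ * (a.factorial : ℝ) / (2 * (B + 1)) / (a.factorial : ℝ) with hcdef
  have hcval : c = δ / (2 * (B + 1)) := by
    rw [hcdef]
    field_simp
  have hcpos : 0 < c := by rw [hcval]; positivity
  set φ : ℝ → ℝ := fun s => c * ∫ τ in (0:ℝ)..(max s 0), gc' (max s 0, τ) * τ ^ a with hφdef
  have hφcont : Continuous φ := by
    apply continuous_const.mul
    exact intervalIntegral.continuous_parametric_intervalIntegral_of_continuous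
      (f := fun (x : ℝ) (τ : ℝ) => gc' (max x 0, τ) * τ ^ a)
      (by fun_prop) (continuous_id.max continuous_const)
  have hφbd : ∀ s : ℝ, 0 ≤ s → |φ s| < δ := by
    intro s hs
    have hmax : max s 0 = s := max_eq_left hs
    obtain ⟨hI0, hIB⟩ := hIbd s hs
    rw [hφdef]
    simp only [hmax]
    rw [abs_of_nonneg (mul_nonneg hcpos.le hI0)]
    have h1 : c * (∫ τ in (0:ℝ)..s, gc' (s, τ) * τ ^ a) ≤ c * B :=
      mul_le_mul_of_nonneg_left hIB hcpos.le
    have h2 : c * B < δ := by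
      rw [hcval]
      rw [div_mul_eq_mul_div, div_lt_iff₀ (by positivity)]
      nlinarith
    linarith
  have hxeq : ∀ s : ℝ, 0 ≤ s → u s = (∫ τ in (0:ℝ)..s, K s τ * u τ) + φ s := by
    intro s hs
    rw [hequ s hs]
    congr 1
    rw [hφdef]
    simp only [max_eq_left hs]
    congr 1
    apply intervalIntegral.integral_congr
    intro τ hτ
    rw [Set.uIcc_of_le hs] at hτ
    show g_c s τ * τ ^ a = gc' (s, τ) * τ ^ a
    rw [hgc' s τ hτ.1 hτ.2]
  exact (hδ φ hφcont hφbd u hu hxeq t ht).le
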